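/- With β_1 = ω̄_1 ∧ dx̄_2 ∧ ... ∧ dx̄_{n-1} and β_k = dx_2 ∧ ... ∧ dx_{k-1} ∧ ω_k ∧ dx̄_k ∧ ... ∧ dx̄_{n-1} for 2 ≤ k ≤ n, the following identities hold: ∂̄β_1 = 0; ∂β_1 = -∂̄β_2 = dx_1 ∧ dx̄_1 ∧ ... ∧ dx̄_{n-1}; for 2 ≤ k ≤ n-1, ∂̄β_{k+1} = -∂β_k = (-1)^k dx_2 ∧ ... ∧ dx_k ∧ dx_1 ∧ dx̄_k ∧ ... ∧ dx̄_{n-1}; and ∂β_n = dx_1 ∧ ... ∧ dx_n. -/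

import Mathlib

noncomputable section

/-- The underlying manifold `ℂ^{2n}` with coordinates `(x, y)`. -/
abbrev Pt (n : ℕ) := (Fin n → ℂ) × (Fin n → ℂ)

/-- Complex-valued constant-coefficient exterior forms on `ℂ^{2n}`: coefficients indexed
by subsets of the `4n` complexified coordinate covectors
`dx_k, dx̄_k, dy_k, dȳ_k` (0-indexed `k`). -/
abbrev Lam (n : ℕ) := Finset (Fin (4 * n)) → ℂ

/-- The Koszul sign for merging two disjoint increasing index sets. -/
def wsign {n : ℕ} (s t : Finset (Fin (4 * n))) : ℂ :=
  (-1 : ℂ) ^ (((s ×ˢ t).filter fun ab => ab.2 < ab.1).card)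

/-- Wedge product on `Lam n`. -/
def wedge {n : ℕ} (f g : Lam n) : Lam n := fun u =>
  ∑ s ∈ u.powerset, wsign s (u \ s) * f s * g (u \ s)

/-- The unit form `1`. -/
def oneF (n : ℕ) : Lam n := fun s => if s = ∅ then 1 else 0

/-- The basis covector with index `i`. -/
def gen {n : ℕ} (i : Fin (4 * n)) : Lam n := fun s => if s = {i} then 1 else 0

/-- `genN n r j`: the covector `dx_j` (`r = 0`), `dx̄_j` (`r = 1`), `dy_j` (`r = 2`),
`dȳ_j` (`r = 3`); here `j` is the 0-indexed coordinate index. -/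
def genN (n r j : ℕ) : Lam n := if h : 4 * j + r < 4 * n then gen ⟨4 * j + r, h⟩ else 0

/-- Wedge product of the covectors of type `r` with 0-indexed coordinate indices
`a, a+1, …, a+len-1`. -/
def prodG (n r a len : ℕ) : Lam n :=
  ((List.range' a len).map (genN n r)).foldr wedge (oneF n)

/-- The real tangent direction `c ⬝ ∂/∂x_k`. -/
def ex (n : ℕ) (k : Fin n) (c : ℂ) : Pt n := (Pi.single k c, 0)

/-- The real tangent direction `c ⬝ ∂/∂y_k`. -/
def ey (n : ℕ) (k : Fin n) (c : ℂ) : Pt n := (0, Pi.single k c)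

/-- Holomorphic Wirtinger derivative of a form-valued function along the complex
direction whose underlying real directions are `v` and `vI = i ⬝ v`. -/
def wirtP {n : ℕ} (F : Pt n → Lam n) (p : Pt n) (v vI : Pt n) : Lam n :=
  (2 : ℂ)⁻¹ • (fderiv ℝ F p v - Complex.I • fderiv ℝ F p vI)

/-- Antiholomorphic Wirtinger derivative. -/
def wirtM {n : ℕ} (F : Pt n → Lam n) (p : Pt n) (v vI : Pt n) : Lam n :=
  (2 : ℂ)⁻¹ • (fderiv ℝ F p v + Complex.I • fderiv ℝ F p vI)

/-- The operator `∂`, the `(1,0)`-part of the exterior derivative: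
`∂F = Σ_k dx_k ∧ ∂F/∂x_k + dy_k ∧ ∂F/∂y_k`. -/
def pdel {n : ℕ} (F : Pt n → Lam n) : Pt n → Lam n := fun p =>
  ∑ k : Fin n,
    (wedge (genN n 0 k) (wirtP F p (ex n k 1) (ex n k Complex.I)) +
     wedge (genN n 2 k) (wirtP F p (ey n k 1) (ey n k Complex.I)))

/-- The operator `∂̄`, the `(0,1)`-part of the exterior derivative:
`∂̄F = Σ_k dx̄_k ∧ ∂F/∂x̄_k + dȳ_k ∧ ∂F/∂ȳ_k`. -/
def pdelBar {n : ℕ} (F : Pt n → Lam n) : Pt n → Lam n := fun p =>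
  ∑ k : Fin n,
    (wedge (genN n 1 k) (wirtM F p (ex n k 1) (ex n k Complex.I)) +
     wedge (genN n 3 k) (wirtM F p (ey n k 1) (ey n k Complex.I)))

/-- The exterior derivative `d = ∂ + ∂̄`. -/
def extD {n : ℕ} (F : Pt n → Lam n) : Pt n → Lam n := fun p => pdel F p + pdelBar F p

/-- The form `ω_{j+1}` (0-indexed `j`): `ω_1 = dy_1 + x̄_1 dx_1` and
`ω_k = dy_k + (x̄_{k-1} - x_k) dx_1` for `k ≥ 2`. -/
def omegaF {n : ℕ} (j : Fin n) : Pt n → Lam n := fun p =>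
  genN n 2 j +
    (if (j : ℕ) = 0 then (starRingEnd ℂ) (p.1 j)
     else (starRingEnd ℂ) (p.1 ⟨(j : ℕ) - 1, lt_of_le_of_lt (Nat.sub_le _ _) j.isLt⟩)
       - p.1 j) • genN n 0 0

/-- The form `ω_j` with 1-indexed `j ∈ {1, …, n}` (junk value `0` otherwise). -/
def omegaN (n j : ℕ) : Pt n → Lam n :=
  if h : j - 1 < n then omegaF ⟨j - 1, h⟩ else 0

/-- The complex conjugate form `ω̄_1 = dȳ_1 + x_1 dx̄_1`. -/
def omegaBar1 (n : ℕ) : Pt n → Lam n := fun p =>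
  genN n 3 0 + (if h : 0 < n then p.1 ⟨0, h⟩ else 0) • genN n 1 0

/-- The form `β_k` (1-indexed `k`): `β_1 = ω̄_1 ∧ dx̄_2 ∧ ⋯ ∧ dx̄_{n-1}` and
`β_k = dx_2 ∧ ⋯ ∧ dx_{k-1} ∧ ω_k ∧ dx̄_k ∧ ⋯ ∧ dx̄_{n-1}` for `2 ≤ k ≤ n`. -/
def betaF (n k : ℕ) : Pt n → Lam n :=
  if k = 1 then fun p => wedge (omegaBar1 n p) (prodG n 1 1 (n - 2))
  else fun p =>
    wedge (prodG n 0 1 (k - 2)) (wedge (omegaN n k p) (prodG n 1 (k - 1) (n - k)))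

end

noncomputable section ZZ
namespace ZZ
open Finset

variable {n : ℕ}

def eF (S : Finset (Fin (4*n))) : Lam n := fun s => if s = S then 1 else 0

lemma gen_eq (i : Fin (4*n)) : gen i = eF {i} := rfl
lemma oneF_eq : oneF n = eF (∅ : Finset (Fin (4*n))) := rfl

lemma wedge_eF_eF (S T : Finset (Fin (4*n))) :
    wedge (eF S) (eF T) =
      if Disjoint S T then wsign S T • eF (S ∪ T) else 0 := by
  funext u
  unfold wedge eF
  by_cases hS : S ⊆ u
  · rw [Finset.sum_eq_single_of_mem S (Finset.mem_powerset.2 hS)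
      (fun b hb hbS => by simp [hbS])]
    simp only [if_pos rfl, mul_one]
    by_cases hT : u \ S = T
    · have hdisj : Disjoint S T := by rw [← hT]; exact disjoint_sdiff
      have hu : u = S ∪ T := by rw [← hT, Finset.union_sdiff_of_subset hS]
      rw [if_pos hT, if_pos hdisj, hT]
      simp [hu]
    · rw [if_neg hT, mul_zero]
      split_ifs with hd
      · have hu : u ≠ S ∪ T := by
          intro h; apply hT; rw [h, Finset.union_sdiff_cancel_left hd]
        simp [hu, Pi.smul_apply]
      · rfl
  · rw [Finset.sum_eq_zero (fun b hb => by
      have : b ≠ S := fun h => hS (h ▸ Finset.mem_powerset.1 hb)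
      simp [this])]
    have hu : u ≠ S ∪ T := fun h => hS (h ▸ Finset.subset_union_left)
    split_ifs with hd
    · simp [hu, Pi.smul_apply]
    · rfl

lemma wedge_zero_right (f : Lam n) : wedge f 0 = 0 := by
  funext u; unfold wedge; simp

lemma wedge_add_right (f g h : Lam n) :
    wedge f (g + h) = wedge f g + wedge f h := by
  funext u; unfold wedge
  simp [mul_add, Finset.sum_add_distrib]

lemma wedge_smul_right (c : ℂ) (f g : Lam n) :
    wedge f (c • g) = c • wedge f g := by
  funext u; unfold wedge
  simp [Finset.mul_sum]
  congr 1; funext s; ring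

lemma wedge_add_left (f g h : Lam n) :
    wedge (f + g) h = wedge f h + wedge g h := by
  funext u; unfold wedge
  simp [add_mul, mul_add, Finset.sum_add_distrib]

lemma wedge_smul_left (c : ℂ) (f g : Lam n) :
    wedge (c • f) g = c • wedge f g := by
  funext u; unfold wedge
  simp [Finset.mul_sum]
  congr 1; funext s; ring

lemma wsign_union_right {s t v : Finset (Fin (4*n))} (h : Disjoint t v) :
    wsign s (t ∪ v) = wsign s t * wsign s v := by
  unfold wsign
  rw [← pow_add]
  congr 1
  rw [Finset.product_union, Finset.filter_union]
  rw [Finset.card_union_of_disjoint]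
  exact Finset.disjoint_filter_filter
    (Finset.disjoint_product.2 (Or.inr h))

lemma wsign_union_left {s t v : Finset (Fin (4*n))} (h : Disjoint s t) :
    wsign (s ∪ t) v = wsign s v * wsign t v := by
  unfold wsign
  rw [← pow_add]
  congr 1
  rw [Finset.union_product, Finset.filter_union,
    Finset.card_union_of_disjoint
      (Finset.disjoint_filter_filter (Finset.disjoint_product.2 (Or.inl h)))]

lemma wsign_singleton_left (i : Fin (4*n)) (t : Finset (Fin (4*n))) :
    wsign {i} t = (-1 : ℂ) ^ (t.filter (· < i)).card := by
  unfold wsign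
  congr 1
  rw [Finset.singleton_product, Finset.filter_map]
  rw [Finset.card_map]
  rfl

lemma wsign_singleton_right (x : Fin (4*n)) (s : Finset (Fin (4*n))) :
    wsign s {x} = (-1 : ℂ) ^ (s.filter (x < ·)).card := by
  unfold wsign
  congr 1
  rw [Finset.product_singleton, Finset.filter_map]
  rw [Finset.card_map]
  rfl

lemma wsign_one {s t : Finset (Fin (4*n))} (h : ∀ a ∈ s, ∀ b ∈ t, a < b) :
    wsign s t = 1 := by
  unfold wsign
  rw [Finset.filter_eq_empty_iff.2 ?_, Finset.card_empty, pow_zero]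
  rintro ⟨a, b⟩ hab
  rw [Finset.mem_product] at hab
  exact not_lt_of_gt (h a hab.1 b hab.2)

def bset (n r a b : ℕ) : Finset (Fin (4*n)) :=
  Finset.univ.filter (fun i => (i : ℕ) % 4 = r ∧ a ≤ (i : ℕ) / 4 ∧ (i : ℕ) / 4 < b)

lemma mem_bset {r a b : ℕ} {i : Fin (4*n)} :
    i ∈ bset n r a b ↔ (i : ℕ) % 4 = r ∧ a ≤ (i : ℕ) / 4 ∧ (i : ℕ) / 4 < b := by
  simp [bset]

lemma bset_empty {r a b : ℕ} (h : b ≤ a) : bset n r a b = ∅ := by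
  ext i; simp only [mem_bset, Finset.notMem_empty, iff_false]
  omega

lemma bset_insert {r a b : ℕ} (hr : r < 4) (hab : a < b) (h : 4 * a + r < 4 * n) :
    bset n r a b = insert ⟨4 * a + r, h⟩ (bset n r (a + 1) b) := by
  ext i
  simp only [mem_bset, Finset.mem_insert, Fin.ext_iff]
  omega

lemma card_bset {r a b : ℕ} (hr : r < 4) (hb : b ≤ n) :
    (bset n r a b).card = b - a := by
  rcases le_or_gt b a with h | h
  · rw [bset_empty h, Finset.card_empty]; omega
  · have hn0 : 0 < 4 * n := by omega
    rw [← Nat.card_Ico a b]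
    refine Finset.card_nbij' (fun i => (i : ℕ) / 4)
      (fun j => ⟨(4 * j + r) % (4 * n), Nat.mod_lt _ hn0⟩) ?_ ?_ ?_ ?_
    · intro i hi; dsimp only; simp only [Finset.mem_coe] at *; rw [mem_bset] at hi; rw [Finset.mem_Ico]; omega
    · intro j hj; dsimp only; simp only [Finset.mem_coe] at *; rw [Finset.mem_Ico] at hj; rw [mem_bset]
      have hmod : (4 * j + r) % (4 * n) = 4 * j + r := Nat.mod_eq_of_lt (by omega)
      simp only [hmod]; omega
    · intro i hi; dsimp only; simp only [Finset.mem_coe] at *; rw [mem_bset] at hi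
      apply Fin.ext
      have : 4 * ((i : ℕ) / 4) + r = (i : ℕ) := by omega
      simp only [this, Nat.mod_eq_of_lt i.isLt]
    · intro j hj; dsimp only; simp only [Finset.mem_coe] at *; rw [Finset.mem_Ico] at hj
      have hmod : (4 * j + r) % (4 * n) = 4 * j + r := Nat.mod_eq_of_lt (by omega)
      simp only [hmod]; omega

lemma genN_eq {r j : ℕ} (h : 4 * j + r < 4 * n) :
    genN n r j = eF {(⟨4 * j + r, h⟩ : Fin (4 * n))} := by
  rw [genN, dif_pos h]; rfl


lemma prodG_eq {r : ℕ} (hr : r < 4) :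
    ∀ len a, a + len ≤ n → prodG n r a len = eF (bset n r a (a + len)) := by
  intro len
  induction len with
  | zero =>
    intro a ha
    have h0 : prodG n r a 0 = oneF n := rfl
    rw [h0, Nat.add_zero, bset_empty (le_refl a)]
    rfl
  | succ m ih =>
    intro a ha
    have h4 : 4 * a + r < 4 * n := by omega
    have hrec : prodG n r a (m + 1) = wedge (genN n r a) (prodG n r (a + 1) m) := by
      rw [prodG, prodG, List.range'_succ, List.map_cons, List.foldr_cons]
    rw [hrec, ih (a + 1) (by omega), genN_eq h4, wedge_eF_eF]
    have hd : Disjoint {(⟨4 * a + r, h4⟩ : Fin (4*n))} (bset n r (a+1) (a+1+m)) := by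
      rw [Finset.disjoint_singleton_left]
      simp only [mem_bset, Fin.val_mk]
      omega
    rw [if_pos hd, wsign_singleton_left]
    have hfil : (bset n r (a+1) (a+1+m)).filter (· < (⟨4 * a + r, h4⟩ : Fin (4*n))) = ∅ := by
      rw [Finset.filter_eq_empty_iff]
      intro i hi
      rw [mem_bset] at hi
      rw [not_lt, Fin.le_def]
      simp only [Fin.val_mk]
      omega
    rw [hfil, Finset.card_empty, pow_zero, one_smul]
    rw [← Finset.insert_eq, ← bset_insert hr (by omega) h4,
      show a + 1 + m = a + (m + 1) by omega]

def pix (j : Fin n) : Pt n →L[ℝ] ℂ :=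
  (ContinuousLinearMap.proj j).comp (ContinuousLinearMap.fst ℝ (Fin n → ℂ) (Fin n → ℂ))

def cpix (j : Fin n) : Pt n →L[ℝ] ℂ :=
  (Complex.conjCLE.toContinuousLinearMap).comp (pix j)

lemma pix_apply (j : Fin n) (p : Pt n) : pix j p = p.1 j := rfl
lemma cpix_apply (j : Fin n) (p : Pt n) : cpix j p = (starRingEnd ℂ) (p.1 j) := rfl

lemma fderiv_affine (C1 C2 : Lam n) (L : Pt n →L[ℝ] ℂ) (p : Pt n) :
    fderiv ℝ (fun q : Pt n => C1 + L q • C2) p = L.smulRight C2 := by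
  have h : (fun q : Pt n => C1 + L q • C2) = fun q => C1 + (L.smulRight C2) q := rfl
  rw [h, fderiv_const_add, ContinuousLinearMap.fderiv]

lemma wirtP_affine (C1 C2 : Lam n) (L : Pt n →L[ℝ] ℂ) (p v vI : Pt n) :
    wirtP (fun q : Pt n => C1 + L q • C2) p v vI
      = ((2:ℂ)⁻¹ * (L v - Complex.I * L vI)) • C2 := by
  rw [wirtP, fderiv_affine C1 C2 L p, ContinuousLinearMap.smulRight_apply,
    ContinuousLinearMap.smulRight_apply]
  rw [smul_smul, ← sub_smul, smul_smul]

lemma wirtM_affine (C1 C2 : Lam n) (L : Pt n →L[ℝ] ℂ) (p v vI : Pt n) :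
    wirtM (fun q : Pt n => C1 + L q • C2) p v vI
      = ((2:ℂ)⁻¹ * (L v + Complex.I * L vI)) • C2 := by
  rw [wirtM, fderiv_affine C1 C2 L p, ContinuousLinearMap.smulRight_apply,
    ContinuousLinearMap.smulRight_apply]
  rw [smul_smul Complex.I, ← add_smul, smul_smul]

lemma pdel_affine (C1 C2 : Lam n) (L : Pt n →L[ℝ] ℂ)
    (hy : ∀ (m : Fin n) (c : ℂ), L (ey n m c) = 0) :
    pdel (fun q : Pt n => C1 + L q • C2) = fun _ => ∑ m : Fin n,
      ((2:ℂ)⁻¹ * (L (ex n m 1) - Complex.I * L (ex n m Complex.I)))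
        • wedge (genN n 0 (m : ℕ)) C2 := by
  funext p
  rw [pdel]
  refine Finset.sum_congr rfl (fun m _ => ?_)
  rw [wirtP_affine, wirtP_affine, hy, hy, wedge_smul_right]
  simp [wedge_zero_right]

lemma pdelBar_affine (C1 C2 : Lam n) (L : Pt n →L[ℝ] ℂ)
    (hy : ∀ (m : Fin n) (c : ℂ), L (ey n m c) = 0) :
    pdelBar (fun q : Pt n => C1 + L q • C2) = fun _ => ∑ m : Fin n,
      ((2:ℂ)⁻¹ * (L (ex n m 1) + Complex.I * L (ex n m Complex.I)))
        • wedge (genN n 1 (m : ℕ)) C2 := by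
  funext p
  rw [pdelBar]
  refine Finset.sum_congr rfl (fun m _ => ?_)
  rw [wirtM_affine, wirtM_affine, hy, hy, wedge_smul_right]
  simp [wedge_zero_right]

lemma pix_ex (j m : Fin n) (c : ℂ) : pix j (ex n m c) = if j = m then c else 0 := by
  rw [pix_apply, ex]
  dsimp only
  rw [Pi.single_apply]
lemma pix_ey (j m : Fin n) (c : ℂ) : pix j (ey n m c) = 0 := rfl
lemma cpix_ex (j m : Fin n) (c : ℂ) :
    cpix j (ex n m c) = if j = m then (starRingEnd ℂ) c else 0 := by
  rw [cpix_apply, ex]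
  simp [Pi.single_apply]
  split_ifs <;> simp
lemma cpix_ey (j m : Fin n) (c : ℂ) : cpix j (ey n m c) = 0 := by
  rw [cpix_apply, ey]; simp

lemma sum_delta (j : Fin n) (c : ℂ) (W : Fin n → Lam n)
    (coef : Fin n → ℂ) (h : ∀ m, coef m = if m = j then c else 0) :
    ∑ m : Fin n, coef m • W m = c • W j := by
  rw [Finset.sum_congr rfl (fun m _ => by rw [h m, ite_smul, zero_smul])]
  simp

def c2F (n m : ℕ) : Lam n :=
  wedge (prodG n 0 1 (m-2)) (wedge (genN n 0 0) (prodG n 1 (m-1) (n-m)))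

lemma betaF_one_eq (hn : 2 ≤ n) : betaF n 1 = fun p =>
    wedge (genN n 3 0) (prodG n 1 1 (n-2))
      + (pix (⟨0, by omega⟩ : Fin n) p) • wedge (genN n 1 0) (prodG n 1 1 (n-2)) := by
  funext p
  rw [betaF, if_pos rfl]
  rw [omegaBar1, dif_pos (by omega : 0 < n), wedge_add_left, wedge_smul_left]
  rfl

lemma betaF_k_eq (m : ℕ) (h2 : 2 ≤ m) (hm : m ≤ n) : betaF n m = fun p =>
    wedge (prodG n 0 1 (m-2)) (wedge (genN n 2 (m-1)) (prodG n 1 (m-1) (n-m)))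
      + ((cpix (⟨m-2, by omega⟩ : Fin n) - pix (⟨m-1, by omega⟩ : Fin n)) p) • c2F n m := by
  funext p
  rw [betaF, if_neg (by omega), omegaN, dif_pos (by omega : m - 1 < n), omegaF]
  rw [if_neg (by simp; omega)]
  rw [wedge_add_left, wedge_smul_left, wedge_add_right, wedge_smul_right]
  rfl

lemma pdelBar_beta1 (hn : 2 ≤ n) : pdelBar (betaF n 1) = fun _ => (0 : Lam n) := by
  rw [betaF_one_eq hn, pdelBar_affine _ _ _ (fun m c => pix_ey _ m c)]
  funext p
  rw [Finset.sum_eq_zero]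
  intro m _
  rw [pix_ex, pix_ex]
  split_ifs <;> simp [Complex.I_mul_I] <;> norm_num

lemma pdel_beta1 (hn : 2 ≤ n) : pdel (betaF n 1) = fun _ =>
    wedge (genN n 0 0) (wedge (genN n 1 0) (prodG n 1 1 (n-2))) := by
  rw [betaF_one_eq hn, pdel_affine _ _ _ (fun m c => pix_ey _ m c)]
  funext p
  rw [sum_delta (⟨0, by omega⟩ : Fin n) 1
    (fun m => wedge (genN n 0 (m : ℕ)) (wedge (genN n 1 0) (prodG n 1 1 (n-2)))) _
    (fun m => ?_), one_smul]
  rw [pix_ex, pix_ex]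
  simp only [Fin.ext_iff, Fin.val_mk]
  split_ifs <;> (try omega) <;> simp [Complex.I_mul_I] <;> norm_num

lemma pdel_betak (m : ℕ) (h2 : 2 ≤ m) (hm : m ≤ n) : pdel (betaF n m) = fun _ =>
    (-1 : ℂ) • wedge (genN n 0 (m-1)) (c2F n m) := by
  rw [betaF_k_eq m h2 hm, pdel_affine _ _ _ (fun j c => by
    rw [ContinuousLinearMap.sub_apply, cpix_ey, pix_ey, sub_zero])]
  funext p
  rw [sum_delta (⟨m-1, by omega⟩ : Fin n) (-1)
    (fun j => wedge (genN n 0 (j : ℕ)) (c2F n m)) _ (fun j => ?_)]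
  rw [ContinuousLinearMap.sub_apply, ContinuousLinearMap.sub_apply,
    cpix_ex, cpix_ex, pix_ex, pix_ex]
  simp only [Fin.ext_iff, Fin.val_mk, map_one, Complex.conj_I]
  split_ifs <;> (try omega) <;> simp [Complex.I_mul_I] <;> norm_num

lemma pdelBar_betak (m : ℕ) (h2 : 2 ≤ m) (hm : m ≤ n) : pdelBar (betaF n m) = fun _ =>
    wedge (genN n 1 (m-2)) (c2F n m) := by
  rw [betaF_k_eq m h2 hm, pdelBar_affine _ _ _ (fun j c => by
    rw [ContinuousLinearMap.sub_apply, cpix_ey, pix_ey, sub_zero])]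
  funext p
  rw [sum_delta (⟨m-2, by omega⟩ : Fin n) 1
    (fun j => wedge (genN n 1 (j : ℕ)) (c2F n m)) _ (fun j => ?_), one_smul]
  rw [ContinuousLinearMap.sub_apply, ContinuousLinearMap.sub_apply,
    cpix_ex, cpix_ex, pix_ex, pix_ex]
  simp only [Fin.ext_iff, Fin.val_mk, map_one, Complex.conj_I]
  split_ifs <;> (try omega) <;> simp [Complex.I_mul_I] <;> norm_num

lemma wedge_gen_eF (i : Fin (4*n)) (T : Finset (Fin (4*n))) (hd : i ∉ T) :
    wedge (eF {i}) (eF T) = (-1:ℂ)^((T.filter (· < i)).card) • eF (insert i T) := by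
  rw [wedge_eF_eF, if_pos (Finset.disjoint_singleton_left.2 hd), wsign_singleton_left,
    ← Finset.insert_eq]

lemma key1 (m : ℕ) (h2 : 2 ≤ m) (hm : m ≤ n) :
    c2F n m = (-1:ℂ)^(m-2) • eF (bset n 0 0 (m-1) ∪ bset n 1 (m-1) (n-1)) := by
  have h4 : (4:ℕ) * 0 + 0 < 4 * n := by omega
  set d0 : Fin (4*n) := ⟨4*0+0, h4⟩ with hd0
  have hd0v : (d0 : ℕ) = 0 := rfl
  set A := bset n 0 1 (m-1) with hA
  set B := bset n 1 (m-1) (n-1) with hB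
  have step1 : wedge (eF {d0}) (eF B) = eF (insert d0 B) := by
    rw [wedge_gen_eF _ _ (by rw [hB, mem_bset, hd0v]; omega)]
    rw [Finset.filter_eq_empty_iff.2 (fun x hx => by
      rw [not_lt, Fin.le_def, hd0v]; omega),
      Finset.card_empty, pow_zero, one_smul]
  have hdisj : Disjoint A (insert d0 B) := by
    rw [Finset.disjoint_left]
    intro x hx hmem
    rw [hA, mem_bset] at hx
    rcases Finset.mem_insert.1 hmem with h | h
    · have hx0 : (x:ℕ) = 0 := by rw [h, hd0]
      omega
    · rw [hB, mem_bset] at h; omega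
  have hsign : wsign A (insert d0 B) = (-1:ℂ)^(m-2) := by
    rw [Finset.insert_eq, wsign_union_right (by
      rw [Finset.disjoint_singleton_left, hB, mem_bset, hd0v]; omega)]
    rw [wsign_singleton_right, wsign_one (fun x hx y hy => by
      rw [hA, mem_bset] at hx; rw [hB, mem_bset] at hy; rw [Fin.lt_def]; omega), mul_one]
    rw [Finset.filter_eq_self.2 (fun x hx => by
      rw [hA, mem_bset] at hx; rw [Fin.lt_def, hd0v]; omega)]
    rw [hA, (card_bset (by omega) (by omega)).trans (by omega : m-1-1 = m-2)]
  have hset : A ∪ insert d0 B = bset n 0 0 (m-1) ∪ B := by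
    ext x
    simp only [Finset.mem_union, Finset.mem_insert, hA, hB, mem_bset, Fin.ext_iff, hd0v]
    omega
  rw [c2F, prodG_eq (by omega) (m-2) 1 (by omega),
    prodG_eq (by omega) (n-m) (m-1) (by omega), genN_eq h4,
    show (1:ℕ) + (m-2) = m-1 by omega, show m-1 + (n-m) = n-1 by omega,
    ← hA, ← hB, ← hd0, step1, wedge_eF_eF, if_pos hdisj, hsign, hset]

lemma key2 (m : ℕ) (h2 : 2 ≤ m) (hm : m ≤ n) :
    (-1:ℂ) • wedge (genN n 0 (m-1)) (c2F n m)
      = eF (bset n 0 0 m ∪ bset n 1 (m-1) (n-1)) := by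
  have h4 : 4 * (m-1) + 0 < 4 * n := by omega
  set dm : Fin (4*n) := ⟨4*(m-1)+0, h4⟩ with hdm
  have hdmv : (dm : ℕ) = 4*(m-1) := by simp [hdm]
  set S := bset n 0 0 (m-1) ∪ bset n 1 (m-1) (n-1) with hS
  have hmem : dm ∉ S := by
    rw [hS, Finset.mem_union, mem_bset, mem_bset, hdmv]
    omega
  have hfil : S.filter (· < dm) = bset n 0 0 (m-1) := by
    ext x
    simp only [Finset.mem_filter, hS, Finset.mem_union, mem_bset, Fin.lt_def, hdmv]
    omega
  rw [key1 m h2 hm, wedge_smul_right, genN_eq h4, ← hdm, ← hS, wedge_gen_eF _ _ hmem,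
    hfil, card_bset (by omega) (by omega), Nat.sub_zero]
  rw [smul_smul, smul_smul]
  have hsc : (-1:ℂ) * (-1:ℂ)^(m-2) * (-1:ℂ)^(m-1) = 1 := by
    rw [mul_assoc, ← pow_add, ← pow_succ']
    exact Even.neg_one_pow ⟨m-1, by omega⟩
  rw [hsc, one_smul]
  have hset : insert dm S = bset n 0 0 m ∪ bset n 1 (m-1) (n-1) := by
    ext x
    simp only [Finset.mem_insert, hS, Finset.mem_union, mem_bset, Fin.ext_iff, hdmv]
    omega
  rw [hset]

lemma key3 (m : ℕ) (h2 : 2 ≤ m) (hm : m ≤ n) :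
    wedge (genN n 1 (m-2)) (c2F n m)
      = (-1:ℂ) • eF (bset n 0 0 (m-1) ∪ bset n 1 (m-2) (n-1)) := by
  have h4 : 4 * (m-2) + 1 < 4 * n := by omega
  set bm : Fin (4*n) := ⟨4*(m-2)+1, h4⟩ with hbm
  have hbmv : (bm : ℕ) = 4*(m-2)+1 := by simp [hbm]
  set S := bset n 0 0 (m-1) ∪ bset n 1 (m-1) (n-1) with hS
  have hmem : bm ∉ S := by
    rw [hS, Finset.mem_union, mem_bset, mem_bset, hbmv]
    omega
  have hfil : S.filter (· < bm) = bset n 0 0 (m-1) := by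
    ext x
    simp only [Finset.mem_filter, hS, Finset.mem_union, mem_bset, Fin.lt_def, hbmv]
    omega
  rw [key1 m h2 hm, wedge_smul_right, genN_eq h4, ← hbm, ← hS, wedge_gen_eF _ _ hmem,
    hfil, card_bset (by omega) (by omega), Nat.sub_zero]
  rw [smul_smul]
  have hsc : (-1:ℂ)^(m-2) * (-1:ℂ)^(m-1) = -1 := by
    rw [← pow_add]
    exact Odd.neg_one_pow ⟨m-2, by omega⟩
  rw [hsc]
  have hset : insert bm S = bset n 0 0 (m-1) ∪ bset n 1 (m-2) (n-1) := by
    ext x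
    simp only [Finset.mem_insert, hS, Finset.mem_union, mem_bset, Fin.ext_iff, hbmv]
    omega
  rw [hset]

lemma key4 (k : ℕ) (h2 : 2 ≤ k) (hk : k ≤ n) :
    wedge (prodG n 0 1 (k-1)) (wedge (genN n 0 0) (prodG n 1 (k-1) (n-k)))
      = (-1:ℂ)^(k-1) • eF (bset n 0 0 k ∪ bset n 1 (k-1) (n-1)) := by
  have h4 : (4:ℕ) * 0 + 0 < 4 * n := by omega
  set d0 : Fin (4*n) := ⟨4*0+0, h4⟩ with hd0
  have hd0v : (d0 : ℕ) = 0 := rfl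
  set A := bset n 0 1 k with hA
  set B := bset n 1 (k-1) (n-1) with hB
  have step1 : wedge (eF {d0}) (eF B) = eF (insert d0 B) := by
    rw [wedge_gen_eF _ _ (by rw [hB, mem_bset, hd0v]; omega)]
    rw [Finset.filter_eq_empty_iff.2 (fun x hx => by
      rw [not_lt, Fin.le_def, hd0v]; omega),
      Finset.card_empty, pow_zero, one_smul]
  have hdisj : Disjoint A (insert d0 B) := by
    rw [Finset.disjoint_left]
    intro x hx hmem
    rw [hA, mem_bset] at hx
    rcases Finset.mem_insert.1 hmem with h | h
    · have hx0 : (x:ℕ) = 0 := by rw [h, hd0]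
      omega
    · rw [hB, mem_bset] at h; omega
  have hsign : wsign A (insert d0 B) = (-1:ℂ)^(k-1) := by
    rw [Finset.insert_eq, wsign_union_right (by
      rw [Finset.disjoint_singleton_left, hB, mem_bset, hd0v]; omega)]
    rw [wsign_singleton_right, wsign_one (fun x hx y hy => by
      rw [hA, mem_bset] at hx; rw [hB, mem_bset] at hy; rw [Fin.lt_def]; omega), mul_one]
    rw [Finset.filter_eq_self.2 (fun x hx => by
      rw [hA, mem_bset] at hx; rw [Fin.lt_def, hd0v]; omega)]
    rw [hA, card_bset (by omega) (by omega)]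
  have hset : A ∪ insert d0 B = bset n 0 0 k ∪ B := by
    ext x
    simp only [Finset.mem_union, Finset.mem_insert, hA, hB, mem_bset, Fin.ext_iff, hd0v]
    omega
  rw [prodG_eq (by omega) (k-1) 1 (by omega),
    prodG_eq (by omega) (n-k) (k-1) (by omega), genN_eq h4,
    show (1:ℕ) + (k-1) = k by omega, show k-1 + (n-k) = n-1 by omega,
    ← hA, ← hB, ← hd0, step1, wedge_eF_eF, if_pos hdisj, hsign, hset]

lemma key5 (hn : 2 ≤ n) :
    wedge (genN n 0 0) (prodG n 1 0 (n-1))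
      = eF ({(⟨4*0+0, by omega⟩ : Fin (4*n))} ∪ bset n 1 0 (n-1)) := by
  have h4 : (4:ℕ) * 0 + 0 < 4 * n := by omega
  rw [prodG_eq (by omega) (n-1) 0 (by omega), Nat.zero_add, genN_eq h4,
    wedge_gen_eF _ _ (by rw [mem_bset]; simp only [Fin.val_mk]; omega)]
  rw [Finset.filter_eq_empty_iff.2 (fun x hx => by
    rw [not_lt, Fin.le_def]; simp only [Fin.val_mk]; omega),
    Finset.card_empty, pow_zero, one_smul, Finset.insert_eq]

lemma key6 (hn : 2 ≤ n) :
    wedge (genN n 0 0) (wedge (genN n 1 0) (prodG n 1 1 (n-2)))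
      = eF ({(⟨4*0+0, by omega⟩ : Fin (4*n))} ∪ bset n 1 0 (n-1)) := by
  have h4 : (4:ℕ) * 0 + 0 < 4 * n := by omega
  have h41 : 4 * 0 + 1 < 4 * n := by omega
  have step1 : wedge (genN n 1 0) (prodG n 1 1 (n-2)) = eF (bset n 1 0 (n-1)) := by
    rw [prodG_eq (by omega) (n-2) 1 (by omega), show (1:ℕ) + (n-2) = n-1 by omega,
      genN_eq h41, wedge_gen_eF _ _ (by rw [mem_bset]; simp only [Fin.val_mk]; omega)]
    rw [Finset.filter_eq_empty_iff.2 (fun x hx => by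
      rw [mem_bset] at hx; rw [not_lt, Fin.le_def]; simp only [Fin.val_mk]; omega),
      Finset.card_empty, pow_zero, one_smul]
    have hset : insert (⟨4*0+1, h41⟩ : Fin (4*n)) (bset n 1 1 (n-1)) = bset n 1 0 (n-1) := by
      ext x
      simp only [Finset.mem_insert, mem_bset, Fin.ext_iff, Fin.val_mk]
      omega
    rw [hset]
  rw [step1, genN_eq h4, wedge_gen_eF _ _ (by rw [mem_bset]; simp only [Fin.val_mk]; omega)]
  rw [Finset.filter_eq_empty_iff.2 (fun x hx => by
    rw [not_lt, Fin.le_def]; simp only [Fin.val_mk]; omega),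
    Finset.card_empty, pow_zero, one_smul, Finset.insert_eq]

end ZZ

/-- the zig-zag identities for the forms `β_1, …, β_n`:
`∂̄β_1 = 0`, `∂β_1 = -∂̄β_2 = dx_1 ∧ dx̄_1 ∧ ⋯ ∧ dx̄_{n-1}`, for `2 ≤ k ≤ n-1`
`∂̄β_{k+1} = -∂β_k = (-1)^k dx_2 ∧ ⋯ ∧ dx_k ∧ dx_1 ∧ dx̄_k ∧ ⋯ ∧ dx̄_{n-1}`, and
`∂β_n = dx_1 ∧ ⋯ ∧ dx_n` (all indices 1-indexed). -/
theorem beta_zigzag (n : ℕ) (hn : 2 ≤ n) :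
    pdelBar (betaF n 1) = (fun _ => 0) ∧
    pdel (betaF n 1) = (fun _ => wedge (genN n 0 0) (prodG n 1 0 (n - 1))) ∧
    pdelBar (betaF n 2) = (fun _ => -(wedge (genN n 0 0) (prodG n 1 0 (n - 1)))) ∧
    (∀ k : ℕ, 2 ≤ k → k ≤ n - 1 →
      pdelBar (betaF n (k + 1)) =
        (fun _ => ((-1 : ℂ) ^ k) •
          wedge (prodG n 0 1 (k - 1)) (wedge (genN n 0 0) (prodG n 1 (k - 1) (n - k)))) ∧
      pdel (betaF n k) =
        fun _ => -(((-1 : ℂ) ^ k) •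
          wedge (prodG n 0 1 (k - 1)) (wedge (genN n 0 0) (prodG n 1 (k - 1) (n - k))))) ∧
    pdel (betaF n n) = fun _ => prodG n 0 0 n := by
  refine ⟨ZZ.pdelBar_beta1 hn, ?_, ?_, ?_, ?_⟩
  · rw [ZZ.pdel_beta1 hn]
    funext p
    rw [ZZ.key6 hn, ZZ.key5 hn]
  · rw [ZZ.pdelBar_betak 2 le_rfl hn]
    funext p
    rw [ZZ.key3 2 le_rfl hn, ZZ.key5 hn, neg_one_smul]
    have hset : (ZZ.bset n 0 0 (2-1) ∪ ZZ.bset n 1 (2-2) (n-1) : Finset (Fin (4*n)))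
        = {(⟨4*0+0, by omega⟩ : Fin (4*n))} ∪ ZZ.bset n 1 0 (n-1) := by
      ext x
      simp only [Finset.mem_union, Finset.mem_singleton, ZZ.mem_bset, Fin.ext_iff, Fin.val_mk]
      omega
    rw [hset]
  · intro k hk2 hkn
    have hkn' : k ≤ n := by omega
    have hsc : ((-1:ℂ)^k * (-1:ℂ)^(k-1)) = -1 := by
      rw [← pow_add]
      exact Odd.neg_one_pow ⟨k-1, by omega⟩
    constructor
    · rw [ZZ.pdelBar_betak (k+1) (by omega) (by omega)]
      funext p
      rw [ZZ.key3 (k+1) (by omega) (by omega), ZZ.key4 k hk2 hkn', smul_smul, hsc,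
        show k+1-1 = k from by omega, show k+1-2 = k-1 from by omega]
    · rw [ZZ.pdel_betak k hk2 hkn']
      funext p
      rw [ZZ.key2 k hk2 hkn', ZZ.key4 k hk2 hkn', smul_smul, hsc, neg_one_smul, neg_neg]
  · rw [ZZ.pdel_betak n hn le_rfl]
    funext p
    rw [ZZ.key2 n hn le_rfl, ZZ.prodG_eq (n := n) (r := 0) (by omega) n 0 (by omega),
      show (0:ℕ) + n = n from by omega,
      ZZ.bset_empty (le_refl (n-1)), Finset.union_empty]
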